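/- Let K_i ∈ ℝ^{(m_i+…+m_N)×n} and L_i ∈ ℝ^{n×(p_1+…+p_i)} (i = 1,…,N) be arbitrary gains. For j ∈ {1,…,N}, let T_j ∈ ℝ^{n×(N+1)n} be the block row with −I_n in block j, I_n in block N+1, and zeros elsewhere. Then for every j and every s ∈ ℂ not in the spectrum of 𝒜, T_j (sI − 𝒜)^{-1} ℒ_j = 0. (Interpreting the j-th controller state block x^{K_j} and the plant state x, this says the transfer function from the innovation channel ℒ_j to x − x^{K_j} vanishes identically: the controller is certainty-equivalent, x^{K_j} acting as the estimate of the plant state based on y_{↑j}.) -/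

import Mathlib

open Matrix

namespace TriLQG

noncomputable section

variable {N : ℕ}

/-- Index type of an `(N+1)`-block partitioned coordinate space with block sizes `d`. -/
abbrev Idx {N : ℕ} (d : Fin (N+1) → ℕ) : Type := Σ k : Fin (N+1), Fin (d k)

/-- Indices belonging to blocks `i, i+1, …, N`. -/
abbrev IdxGe {N : ℕ} (d : Fin (N+1) → ℕ) (i : Fin (N+1)) : Type := {x : Idx d // i ≤ x.1}

/-- Indices belonging to blocks `0, 1, …, i`. -/
abbrev IdxLe {N : ℕ} (d : Fin (N+1) → ℕ) (i : Fin (N+1)) : Type := {x : Idx d // x.1 ≤ i}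

/-- The selector matrix `E^{↓i}` (columns of the identity for blocks `i,…,N`). -/
def padGe (d : Fin (N+1) → ℕ) (i : Fin (N+1)) : Matrix (Idx d) (IdxGe d i) ℝ :=
  Matrix.of fun r c => if r = (c : Idx d) then 1 else 0

/-- The selector matrix `E^{↑i}` (columns of the identity for blocks `0,…,i`). -/
def padLe (d : Fin (N+1) → ℕ) (i : Fin (N+1)) : Matrix (Idx d) (IdxLe d i) ℝ :=
  Matrix.of fun r c => if r = (c : Idx d) then 1 else 0

/-- Complexification of a real matrix. -/
def mc {α β : Type*} (M : Matrix α β ℝ) : Matrix α β ℂ := M.map Complex.ofReal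

/-- A real square matrix is Hurwitz if its (complex) spectrum lies in the open left half plane. -/
def IsHurwitz {t : Type*} [Fintype t] [DecidableEq t] (M : Matrix t t ℝ) : Prop :=
  ∀ z ∈ spectrum ℂ (mc M), z.re < 0

open Classical in
/-- The (unique, symmetric, positive semidefinite) square root of a positive semidefinite
real matrix; junk value `0` if the matrix is not positive semidefinite. -/
def msqrt {t : Type*} [Fintype t] [DecidableEq t] (M : Matrix t t ℝ) : Matrix t t ℝ :=
  if h : M.PosSemidef then
    h.1.eigenvectorUnitary.1 * diagonal (Real.sqrt ∘ h.1.eigenvalues) *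
      (star h.1.eigenvectorUnitary : Matrix t t ℝ)
  else 0

/-- Full column rank. -/
def FullColRank {α β : Type*} [Fintype β] {R : Type*} [CommRing R] (M : Matrix α β R) : Prop :=
  M.rank = Fintype.card β

/-- Full row rank. -/
def FullRowRank {α β : Type*} [Fintype α] [Fintype β] {R : Type*} [CommRing R]
    (M : Matrix α β R) : Prop :=
  M.rank = Fintype.card α

/-- `ARE_p(Ã,B̃,F̃,H̃)` together with its gain: `X` is a symmetric solution of the
control algebraic Riccati equation and `K` is the associated gain. -/
def AREp {n' m' q' : Type*} [Fintype n'] [Fintype m'] [Fintype q'] [DecidableEq m']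
    (At : Matrix n' n' ℝ) (Bt : Matrix n' m' ℝ) (Ft : Matrix q' n' ℝ) (Ht : Matrix q' m' ℝ)
    (X : Matrix n' n' ℝ) (K : Matrix m' n' ℝ) : Prop :=
  X.IsSymm ∧
  Atᵀ * X + X * At - (X * Bt + Ftᵀ * Ht) * (Htᵀ * Ht)⁻¹ * (X * Bt + Ftᵀ * Ht)ᵀ + Ftᵀ * Ft = 0 ∧
  K = -((Htᵀ * Ht)⁻¹ * (X * Bt + Ftᵀ * Ht)ᵀ)

/-- `ARE_d(Ã,C̃,W̃,Ṽ)` together with its gain. -/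
def AREd {n' p' r' : Type*} [Fintype n'] [Fintype p'] [Fintype r'] [DecidableEq p']
    (At : Matrix n' n' ℝ) (Ct : Matrix p' n' ℝ) (Wt : Matrix n' r' ℝ) (Vt : Matrix p' r' ℝ)
    (Y : Matrix n' n' ℝ) (L : Matrix n' p' ℝ) : Prop :=
  Y.IsSymm ∧
  At * Y + Y * Atᵀ - (Ct * Y + Vt * Wtᵀ)ᵀ * (Vt * Vtᵀ)⁻¹ * (Ct * Y + Vt * Wtᵀ) + Wt * Wtᵀ = 0 ∧
  L = -((Ct * Y + Vt * Wtᵀ)ᵀ * (Vt * Vtᵀ)⁻¹)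

/-- Lower block triangular sparsity. -/
def IsLBT {N : ℕ} {d e : Fin (N+1) → ℕ} (M : Matrix (Idx d) (Idx e) ℝ) : Prop :=
  ∀ a : Idx d, ∀ b : Idx e, a.1 < b.1 → M a b = 0

/-- The data of the `(N+1)`-player triangular plant. -/
structure Plant (N : ℕ) where
  nd : Fin (N+1) → ℕ
  md : Fin (N+1) → ℕ
  pd : Fin (N+1) → ℕ
  q : ℕ
  r : ℕ
  A : Matrix (Idx nd) (Idx nd) ℝ
  B : Matrix (Idx nd) (Idx md) ℝ
  C : Matrix (Idx pd) (Idx nd) ℝ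
  F : Matrix (Fin q) (Idx nd) ℝ
  H : Matrix (Fin q) (Idx md) ℝ
  W : Matrix (Idx nd) (Fin r) ℝ
  V : Matrix (Idx pd) (Fin r) ℝ

variable (P : Plant N)

/-- family of controller gains `K_i ∈ ℝ^{(m_i+⋯+m_N)×n}` -/
abbrev KGains (P : Plant N) : Type := (i : Fin (N+1)) → Matrix (IdxGe P.md i) (Idx P.nd) ℝ

/-- family of observer gains `L_i ∈ ℝ^{n×(p_1+⋯+p_i)}` -/
abbrev LGains (P : Plant N) : Type := (i : Fin (N+1)) → Matrix (Idx P.nd) (IdxLe P.pd i) ℝ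

/-- family of symmetric matrices `X_i` (or `Y_i`) -/
abbrev SFam (P : Plant N) : Type := Fin (N+1) → Matrix (Idx P.nd) (Idx P.nd) ℝ

def Bdown (i : Fin (N+1)) : Matrix (Idx P.nd) (IdxGe P.md i) ℝ := P.B.submatrix id Subtype.val
def Hdown (i : Fin (N+1)) : Matrix (Fin P.q) (IdxGe P.md i) ℝ := P.H.submatrix id Subtype.val
def Cup (i : Fin (N+1)) : Matrix (IdxLe P.pd i) (Idx P.nd) ℝ := P.C.submatrix Subtype.val id
def Vup (i : Fin (N+1)) : Matrix (IdxLe P.pd i) (Fin P.r) ℝ := P.V.submatrix Subtype.val id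

/-- `Ψ_{↓i}^{↓i} = (H^{↓i})ᵀ H^{↓i}` -/
def Psidd (i : Fin (N+1)) : Matrix (IdxGe P.md i) (IdxGe P.md i) ℝ := (Hdown P i)ᵀ * Hdown P i

/-- `Φ_{↑j}^{↑j} = V_{↑j} (V_{↑j})ᵀ` -/
def Phiuu (j : Fin (N+1)) : Matrix (IdxLe P.pd j) (IdxLe P.pd j) ℝ := Vup P j * (Vup P j)ᵀ

/-- The coupled Riccati system (2a)–(2d) of the paper. -/
def Coupled (X : SFam P) (K : KGains P) (Y : SFam P) (L : LGains P) : Prop :=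
  AREp P.A (Bdown P 0) P.F (Hdown P 0) (X 0) (K 0) ∧
  (∀ t : Fin N,
    AREp (P.A + L t.castSucc * Cup P t.castSucc) (Bdown P t.succ)
      (-(Hdown P t.castSucc * K t.castSucc)) (Hdown P t.succ) (X t.succ) (K t.succ)) ∧
  AREd P.A (Cup P (Fin.last N)) P.W (Vup P (Fin.last N)) (Y (Fin.last N)) (L (Fin.last N)) ∧
  (∀ t : Fin N,
    AREd (P.A + Bdown P t.succ * K t.succ) (Cup P t.castSucc)
      (-(L t.succ * Vup P t.succ)) (Vup P t.castSucc) (Y t.castSucc) (L t.castSucc))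

/-- `A^{KL}_{k+1,k}` for `k = 0, 1, …, N+1` (`k = 0` gives `A+BK_1`,
`k = N+1` gives `A+L_N C`). -/
def AKL (K : KGains P) (L : LGains P) (k : Fin (N+2)) : Matrix (Idx P.nd) (Idx P.nd) ℝ :=
  if hk : k.1 < N + 1 then
    (if k.1 = 0 then P.A + Bdown P 0 * K 0
     else
       have h1 : k.1 - 1 < N + 1 := by omega
       P.A + Bdown P ⟨k.1, hk⟩ * K ⟨k.1, hk⟩ +
         L ⟨k.1 - 1, h1⟩ * Cup P ⟨k.1 - 1, h1⟩)
  else P.A + L (Fin.last N) * Cup P (Fin.last N)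

/-- index set of the `n(N+1)`-dimensional controller state space -/
abbrev CtrIx {N : ℕ} (nd : Fin (N+1) → ℕ) : Type := Fin (N+1) × Idx nd

/-- index set of the `n(N+2)`-dimensional closed-loop state space:
`N+1` controller blocks and one plant block -/
abbrev BigIx {N : ℕ} (nd : Fin (N+1) → ℕ) : Type := CtrIx nd ⊕ Idx nd

/-- the incidence matrix `ζ` -/
def zetaN (nd : Fin (N+1) → ℕ) : Matrix (CtrIx nd) (CtrIx nd) ℝ :=
  Matrix.of fun x y => if y.1 ≤ x.1 ∧ x.2 = y.2 then 1 else 0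

/-- block diagonal matrix -/
def blkDiagN {nd : Fin (N+1) → ℕ} (f : Fin (N+1) → Matrix (Idx nd) (Idx nd) ℝ) :
    Matrix (CtrIx nd) (CtrIx nd) ℝ :=
  Matrix.of fun x y => if x.1 = y.1 then f x.1 x.2 y.2 else 0

/-- `A_K` of the optimal controller realization -/
def AK (K : KGains P) (L : LGains P) : Matrix (CtrIx P.nd) (CtrIx P.nd) ℝ :=
  blkDiagN (fun _ => P.A) + blkDiagN (fun k => L k * Cup P k) +
    zetaN P.nd * blkDiagN (fun k => Bdown P k * K k) * (zetaN P.nd)⁻¹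

/-- `B_K` of the optimal controller realization -/
def BK (L : LGains P) : Matrix (CtrIx P.nd) (Idx P.pd) ℝ :=
  Matrix.of fun x c => -((L x.1 * (padLe P.pd x.1)ᵀ) x.2 c)

/-- `C_K` of the optimal controller realization -/
def CK (K : KGains P) : Matrix (Idx P.md) (CtrIx P.nd) ℝ :=
  (Matrix.of fun rr (x : CtrIx P.nd) => (padGe P.md x.1 * K x.1) rr x.2) * (zetaN P.nd)⁻¹

/-- closed-loop `𝒜` -/
def Acal (K : KGains P) (L : LGains P) : Matrix (BigIx P.nd) (BigIx P.nd) ℝ :=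
  Matrix.fromBlocks (AK P K L) (BK P L * P.C) (P.B * CK P K) P.A

/-- closed-loop `ℬ` -/
def Bcal : Matrix (BigIx P.nd) (Idx P.md) ℝ :=
  Matrix.of fun x j => Sum.elim (fun _ => (0:ℝ)) (fun a => P.B a j) x

/-- closed-loop `𝒲` -/
def Wcal (L : LGains P) : Matrix (BigIx P.nd) (Fin P.r) ℝ :=
  Matrix.of fun x j => Sum.elim (fun y => (BK P L * P.V) y j) (fun a => P.W a j) x

/-- closed-loop `ℱ` -/
def Fcal (K : KGains P) : Matrix (Fin P.q) (BigIx P.nd) ℝ :=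
  Matrix.of fun i x => Sum.elim (fun y => (P.H * CK P K) i y) (fun a => P.F i a) x

/-- closed-loop `𝒞` -/
def Ccal : Matrix (Idx P.pd) (BigIx P.nd) ℝ :=
  Matrix.of fun i x => Sum.elim (fun _ => (0:ℝ)) (fun a => P.C i a) x

/-- block index of a closed-loop index -/
def blkOf {nd : Fin (N+1) → ℕ} (x : BigIx nd) : Fin (N+2) :=
  Sum.elim (fun y => y.1.castSucc) (fun _ => Fin.last (N+1)) x

/-- within-block state of a closed-loop index -/
def stOf {nd : Fin (N+1) → ℕ} (x : BigIx nd) : Idx nd :=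
  Sum.elim Prod.snd id x

/-- the incidence matrix `ζ̄` of the `(N+2)`-fold block structure -/
def zetaBar (nd : Fin (N+1) → ℕ) : Matrix (BigIx nd) (BigIx nd) ℝ :=
  Matrix.of fun x y => if blkOf y ≤ blkOf x ∧ stOf x = stOf y then 1 else 0

/-- embedding of a within-block index into the closed-loop index set, at block `k` -/
def emb {nd : Fin (N+1) → ℕ} (k : Fin (N+2)) (a : Idx nd) : BigIx nd :=
  if h : k.1 < N + 1 then Sum.inl (⟨⟨k.1, h⟩, a⟩ : CtrIx nd) else Sum.inr a

/-- `𝒦_i` of the paper (eq. (9)). -/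
def Kcal (K : KGains P) (i : Fin (N+1)) : Matrix (IdxGe P.md i) (BigIx P.nd) ℝ :=
  (padGe P.md i)ᵀ *
    Matrix.of fun (rr : Idx P.md) (x : BigIx P.nd) =>
      Sum.elim
        (fun y : CtrIx P.nd =>
          if hl : y.1.1 < N then
            (if y.1 < i then (0:ℝ)
             else
               have h1 : y.1.1 + 1 < N + 1 := by omega
               (padGe P.md ⟨y.1.1 + 1, h1⟩ * K ⟨y.1.1 + 1, h1⟩ -
                   padGe P.md y.1 * K y.1) rr y.2)
          else (-(padGe P.md (Fin.last N) * K (Fin.last N))) rr y.2)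
        (fun a => (padGe P.md i * K i) rr a) x

/-- `ℒ_j` of the paper (eq. (10)). -/
def Lcal (L : LGains P) (j : Fin (N+1)) : Matrix (BigIx P.nd) (IdxLe P.pd j) ℝ :=
  Matrix.of fun x c =>
    Sum.elim
      (fun y : CtrIx P.nd =>
        if y.1 < j then (L y.1 * (padLe P.pd y.1)ᵀ * padLe P.pd j) y.2 c else (L j) y.2 c)
      (fun a => (L j) a c) x

/-- `J̃_i` of the paper (eq. (11)). -/
def Jtil (nd : Fin (N+1) → ℕ) (i : Fin (N+1)) : Matrix (Idx nd) (BigIx nd) ℝ :=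
  Matrix.of fun a x =>
    Sum.elim
      (fun y : CtrIx nd => if 0 < i.1 ∧ y.1.1 = i.1 - 1 ∧ a = y.2 then (1:ℝ) else 0)
      (fun b => if a = b then (-1:ℝ) else 0) x

/-- `Ĵ_j` of the paper (eq. (11)). -/
def Jhat (nd : Fin (N+1) → ℕ) (j : Fin (N+1)) : Matrix (BigIx nd) (Idx nd) ℝ :=
  Matrix.of fun x a =>
    Sum.elim
      (fun y : CtrIx nd => if j < y.1 ∧ y.2 = a then (1:ℝ) else 0)
      (fun b => if b = a then (1:ℝ) else 0) x

/-- `Γ_i = −(Ψ_{↓i}^{↓i})^{1/2} 𝒦_i` for `i ≥ 1` (Lemma 2 of the paper). -/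
def Gam (K : KGains P) (i : Fin (N+1)) : Matrix (IdxGe P.md i) (BigIx P.nd) ℝ :=
  -(msqrt (Psidd P i) * Kcal P K i)

/-- `Λ_j = −ℒ_j (Φ_{↑j}^{↑j})^{1/2}` for `j ≤ N` (Lemma 2 of the paper). -/
def Lam (L : LGains P) (j : Fin (N+1)) : Matrix (BigIx P.nd) (IdxLe P.pd j) ℝ :=
  -(Lcal P L j * msqrt (Phiuu P j))

/-- the inner factor `U_1(s)` -/
def Uone (K : KGains P) (L : LGains P) (s : ℂ) : Matrix (Fin P.q) (IdxGe P.md 0) ℂ :=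
  mc (P.F + Hdown P 0 * K 0) * (s • 1 - mc (AKL P K L 0))⁻¹ * mc (Bdown P 0) *
      (mc (msqrt (Psidd P 0)))⁻¹ +
    mc (Hdown P 0) * (mc (msqrt (Psidd P 0)))⁻¹

/-- the inner factor `U_{t+2}(s)` (paper indexing), mapping block level `t+1` to `t` -/
def Usucc (K : KGains P) (L : LGains P) (t : Fin N) (s : ℂ) :
    Matrix (IdxGe P.md t.castSucc) (IdxGe P.md t.succ) ℂ :=
  mc (msqrt (Psidd P t.castSucc)) *
      mc ((padGe P.md t.castSucc)ᵀ *
        (padGe P.md t.succ * K t.succ - padGe P.md t.castSucc * K t.castSucc)) *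
      (s • 1 - mc (AKL P K L t.succ.castSucc))⁻¹ * mc (Bdown P t.succ) *
      (mc (msqrt (Psidd P t.succ)))⁻¹ +
    mc (msqrt (Psidd P t.castSucc)) * mc ((padGe P.md t.castSucc)ᵀ * padGe P.md t.succ) *
      (mc (msqrt (Psidd P t.succ)))⁻¹

/-- the co-inner factor `V_{N+1}(s)` (paper indexing: the last one) -/
def Vlast (K : KGains P) (L : LGains P) (s : ℂ) :
    Matrix (IdxLe P.pd (Fin.last N)) (Fin P.r) ℂ :=
  (mc (msqrt (Phiuu P (Fin.last N))))⁻¹ * mc (Cup P (Fin.last N)) *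
      (s • 1 - mc (AKL P K L (Fin.last (N+1))))⁻¹ *
      mc (P.W + L (Fin.last N) * Vup P (Fin.last N)) +
    (mc (msqrt (Phiuu P (Fin.last N))))⁻¹ * mc (Vup P (Fin.last N))

/-- the co-inner factor `V_{t+1}(s)` (paper indexing), for `t+1 ≤ N` -/
def Vmid (K : KGains P) (L : LGains P) (t : Fin N) (s : ℂ) :
    Matrix (IdxLe P.pd t.castSucc) (IdxLe P.pd t.succ) ℂ :=
  (mc (msqrt (Phiuu P t.castSucc)))⁻¹ * mc (Cup P t.castSucc) *
      (s • 1 - mc (AKL P K L t.succ.castSucc))⁻¹ *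
      mc ((L t.castSucc * (padLe P.pd t.castSucc)ᵀ - L t.succ * (padLe P.pd t.succ)ᵀ) *
        padLe P.pd t.succ * msqrt (Phiuu P t.succ)) +
    (mc (msqrt (Phiuu P t.castSucc)))⁻¹ *
      mc ((padLe P.pd t.castSucc)ᵀ * padLe P.pd t.succ * msqrt (Phiuu P t.succ))

/-- the product `U_1(s) U_2(s) ⋯ U_i(s)` -/
def Uprod (K : KGains P) (L : LGains P) (s : ℂ) :
    (i : Fin (N+1)) → Matrix (Fin P.q) (IdxGe P.md i) ℂ :=
  Fin.induction (motive := fun i => Matrix (Fin P.q) (IdxGe P.md i) ℂ)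
    (Uone P K L s) (fun t ih => ih * Usucc P K L t s)

/-- the product `V_j(s) V_{j+1}(s) ⋯ V_{N+1}(s)` -/
def Vprod (K : KGains P) (L : LGains P) (s : ℂ) :
    (j : Fin (N+1)) → Matrix (IdxLe P.pd j) (Fin P.r) ℂ :=
  Fin.reverseInduction (motive := fun j => Matrix (IdxLe P.pd j) (Fin P.r) ℂ)
    (Vlast P K L s) (fun t ih => Vmid P K L t s * ih)

/-- closed-loop transfer function `G11(s) = ℱ(sI−𝒜)⁻¹𝒲` -/
def G11 (K : KGains P) (L : LGains P) (s : ℂ) : Matrix (Fin P.q) (Fin P.r) ℂ :=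
  mc (Fcal P K) * (s • 1 - mc (Acal P K L))⁻¹ * mc (Wcal P L)

/-- closed-loop transfer function `G12(s) = ℱ(sI−𝒜)⁻¹ℬ + H` -/
def G12 (K : KGains P) (L : LGains P) (s : ℂ) : Matrix (Fin P.q) (Idx P.md) ℂ :=
  mc (Fcal P K) * (s • 1 - mc (Acal P K L))⁻¹ * mc (Bcal P) + mc P.H

/-- closed-loop transfer function `G21(s) = 𝒞(sI−𝒜)⁻¹𝒲 + V` -/
def G21 (K : KGains P) (L : LGains P) (s : ℂ) : Matrix (Idx P.pd) (Fin P.r) ℂ :=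
  mc (Ccal P) * (s • 1 - mc (Acal P K L))⁻¹ * mc (Wcal P L) + mc P.V

end

end TriLQG

namespace TriLQG

/-- `T_j`: the block row with `−I_n` in (controller) block `j`, `I_n` in the plant block
and zeros elsewhere, so that `T_j` applied to the closed-loop state gives `x − x^{K_j}`. -/
def Tmat (nd : Fin (N+1) → ℕ) (j : Fin (N+1)) : Matrix (Idx nd) (BigIx nd) ℝ :=
  Matrix.of fun a x =>
    Sum.elim
      (fun y : CtrIx nd => if y.1 = j ∧ a = y.2 then (-1 : ℝ) else 0)
      (fun b => if a = b then (1 : ℝ) else 0) x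

noncomputable section Stmt11Aux

open Matrix Finset

variable {N : ℕ}

/-! ### scalar telescoping lemmas -/

private lemma sum_ite_Ico (n c : ℕ) (h : ℕ → ℝ) :
    ∑ i ∈ Finset.range n, (if c ≤ i then h i else 0) = ∑ i ∈ Finset.Ico c n, h i := by
  have hsub : Finset.Ico c n ⊆ Finset.range n := fun i hi =>
    Finset.mem_range.2 (Finset.mem_Ico.1 hi).2
  have h1 : ∑ i ∈ Finset.Ico c n, (if c ≤ i then h i else 0)
      = ∑ i ∈ Finset.range n, (if c ≤ i then h i else 0) :=
    Finset.sum_subset hsub (fun i hi hni =>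
      if_neg (fun hc => hni (Finset.mem_Ico.2 ⟨hc, Finset.mem_range.1 hi⟩)))
  rw [← h1]
  exact Finset.sum_congr rfl fun i hi => if_pos (Finset.mem_Ico.1 hi).1

private lemma ico_telescope (f : ℕ → ℝ) {c n : ℕ} (hcn : c ≤ n) :
    ∑ i ∈ Finset.Ico c n, (f i - f (i+1)) = f c - f n := by
  rw [Finset.sum_Ico_eq_sub _ hcn, Finset.sum_range_sub' f, Finset.sum_range_sub' f]
  ring

private lemma fin_telescope (g : ℕ → ℝ) (hg : ∀ i, N + 1 ≤ i → g i = 0)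
    (j k : Fin (N+1)) (hjk : j ≤ k) :
    ∑ m : Fin (N+1), (if j ≤ m then
        ((if m.1 ≤ k.1 then g m.1 else 0) - (if m.1 + 1 ≤ k.1 then g (m.1+1) else 0)) else 0)
      = ∑ m : Fin (N+1), (if j ≤ m then g m.1 - g (m.1 + 1) else 0) := by
  have hk1 : k.1 < N + 1 := k.isLt
  have hjk' : j.1 ≤ k.1 := hjk
  have hL : ∑ m : Fin (N+1), (if j ≤ m then
        ((if m.1 ≤ k.1 then g m.1 else 0) - (if m.1 + 1 ≤ k.1 then g (m.1+1) else 0)) else 0)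
      = ∑ i ∈ Finset.range (N+1), (if j.1 ≤ i then
        ((if i ≤ k.1 then g i else 0) - (if i + 1 ≤ k.1 then g (i+1) else 0)) else 0) := by
    rw [← Fin.sum_univ_eq_sum_range]
    exact Finset.sum_congr rfl fun m _ => by simp only [Fin.le_def]
  have hR : ∑ m : Fin (N+1), (if j ≤ m then g m.1 - g (m.1 + 1) else 0)
      = ∑ i ∈ Finset.range (N+1), (if j.1 ≤ i then g i - g (i+1) else 0) := by
    rw [← Fin.sum_univ_eq_sum_range]
    exact Finset.sum_congr rfl fun m _ => by simp only [Fin.le_def]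
  rw [hL, hR, sum_ite_Ico, sum_ite_Ico,
    ico_telescope (fun i => if i ≤ k.1 then g i else 0) (by omega),
    ico_telescope g (by omega)]
  simp only [if_pos hjk', if_neg (show ¬ (N+1 ≤ k.1) by omega), hg (N+1) le_rfl, sub_zero]

/-! ### the inverse of `ζ` -/

def muN (nd : Fin (N+1) → ℕ) : Matrix (CtrIx nd) (CtrIx nd) ℝ :=
  Matrix.of fun x y =>
    ((if x.1 = y.1 then (1:ℝ) else 0) - (if x.1.1 = y.1.1 + 1 then 1 else 0)) *
      (if x.2 = y.2 then 1 else 0)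

lemma zetaN_mul_muN (nd : Fin (N+1) → ℕ) : zetaN nd * muN nd = 1 := by
  ext ⟨k, a⟩ ⟨l, b⟩
  rw [Matrix.mul_apply, Fintype.sum_prod_type]
  have hinner : ∀ m : Fin (N+1),
      ∑ c : Idx nd, zetaN nd (k,a) (m,c) * muN nd (m,c) (l,b)
        = (if m ≤ k then (1:ℝ) else 0) *
            (((if m = l then (1:ℝ) else 0) - (if m.1 = l.1 + 1 then 1 else 0)) *
              (if a = b then 1 else 0)) := by
    intro m
    rw [Finset.sum_eq_single a]
    · by_cases hmk : m ≤ k <;> simp [zetaN, muN, hmk]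
    · intro c _ hca
      have : ¬ (a = c) := fun h => hca h.symm
      simp [zetaN, this]
    · simp
  simp_rw [hinner]
  by_cases hab : a = b
  · subst hab
    have expand : ∀ m : Fin (N+1), (if m ≤ k then (1:ℝ) else 0) *
        (((if m = l then (1:ℝ) else 0) - (if m.1 = l.1 + 1 then 1 else 0)) *
          (if a = a then 1 else 0))
        = (if m ≤ k then (1:ℝ) else 0) * (if m = l then (1:ℝ) else 0)
          - (if m ≤ k then (1:ℝ) else 0) * (if m.1 = l.1 + 1 then (1:ℝ) else 0) := by
      intro m; simp [mul_sub]
    rw [Finset.sum_congr rfl (fun m _ => expand m), Finset.sum_sub_distrib]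
    have hS1 : ∑ m : Fin (N+1), (if m ≤ k then (1:ℝ) else 0) * (if m = l then (1:ℝ) else 0)
        = if l.1 ≤ k.1 then 1 else 0 := by
      rw [Finset.sum_eq_single l]
      · by_cases hlk : l.1 ≤ k.1 <;> simp [Fin.le_def, hlk]
      · intro m _ hml; simp [hml]
      · simp
    have hS2 : ∑ m : Fin (N+1), (if m ≤ k then (1:ℝ) else 0) * (if m.1 = l.1 + 1 then (1:ℝ) else 0)
        = if l.1 + 1 ≤ k.1 then 1 else 0 := by
      by_cases hl : l.1 + 1 < N + 1
      · rw [Finset.sum_eq_single (⟨l.1+1, hl⟩ : Fin (N+1))]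
        · simp [Fin.le_def]
        · intro m _ hm
          have : ¬ (m.1 = l.1 + 1) := fun h => hm (Fin.ext h)
          simp [this]
        · simp
      · rw [Finset.sum_eq_zero, if_neg (by omega)]
        intro m _
        have : ¬ (m.1 = l.1 + 1) := by have := m.isLt; omega
        simp [this]
    rw [hS1, hS2]
    have hkl : ((1 : Matrix (CtrIx nd) (CtrIx nd) ℝ) (k,a) (l,a))
        = if k.1 = l.1 then (1:ℝ) else 0 := by
      by_cases h : k = l
      · subst h; simp [Matrix.one_apply]
      · rw [Matrix.one_apply_ne (fun hc => h (by injection hc))]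
        rw [if_neg (fun hc => h (Fin.ext hc))]
    rw [hkl]
    by_cases h : k.1 = l.1
    · rw [if_pos h, if_pos (by omega), if_neg (by omega)]; norm_num
    · rw [if_neg h]
      by_cases h2 : l.1 ≤ k.1
      · rw [if_pos h2, if_pos (by omega)]; norm_num
      · rw [if_neg h2, if_neg (by omega)]; norm_num
  · have : ∀ m : Fin (N+1), (if m ≤ k then (1:ℝ) else 0) *
        (((if m = l then (1:ℝ) else 0) - (if m.1 = l.1 + 1 then 1 else 0)) *
          (if a = b then 1 else 0)) = 0 := by
      intro m; simp [hab]
    simp_rw [this]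
    rw [Finset.sum_const_zero, Matrix.one_apply_ne]
    intro hc
    exact hab (congrArg Prod.snd hc)

lemma zetaN_inv (nd : Fin (N+1) → ℕ) : (zetaN nd)⁻¹ = muN nd :=
  Matrix.inv_eq_right_inv (zetaN_mul_muN nd)

lemma mul_muN_apply {α : Type*} [Fintype α] {nd : Fin (N+1) → ℕ}
    (W : Matrix α (CtrIx nd) ℝ) (x : α) (l : Fin (N+1)) (b : Idx nd) :
    (W * muN nd) x (l, b) =
      W x (l, b) - (if h : l.1 + 1 < N + 1 then W x (⟨l.1+1, h⟩, b) else 0) := by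
  rw [Matrix.mul_apply, Fintype.sum_prod_type]
  have hinner : ∀ m : Fin (N+1), ∑ c : Idx nd, W x (m,c) * muN nd (m,c) (l,b)
      = W x (m, b) * (if m = l then (1:ℝ) else 0)
        - W x (m, b) * (if m.1 = l.1 + 1 then (1:ℝ) else 0) := by
    intro m
    rw [Finset.sum_eq_single b]
    · simp [muN, mul_sub]
    · intro c _ hcb; simp [muN, hcb]
    · simp
  simp_rw [hinner]
  rw [Finset.sum_sub_distrib]
  congr 1
  · rw [Finset.sum_eq_single l]
    · simp
    · intro m _ hml; simp [hml]
    · simp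
  · by_cases hl : l.1 + 1 < N + 1
    · rw [dif_pos hl, Finset.sum_eq_single (⟨l.1+1, hl⟩ : Fin (N+1))]
      · simp
      · intro m _ hm
        have : ¬ (m.1 = l.1 + 1) := fun h => hm (Fin.ext h)
        simp [this]
      · simp
    · rw [dif_neg hl, Finset.sum_eq_zero]
      intro m _
      have : ¬ (m.1 = l.1 + 1) := by have := m.isLt; omega
      simp [this]

lemma zetaN_mul_blkDiagN {nd : Fin (N+1) → ℕ} (f : Fin (N+1) → Matrix (Idx nd) (Idx nd) ℝ)
    (k l : Fin (N+1)) (a b : Idx nd) :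
    (zetaN nd * blkDiagN f) (k, a) (l, b) = if l ≤ k then f l a b else 0 := by
  rw [Matrix.mul_apply, Fintype.sum_prod_type]
  have hinner : ∀ m : Fin (N+1), ∑ c : Idx nd, zetaN nd (k,a) (m,c) * blkDiagN f (m,c) (l,b)
      = (if m ≤ k then (1:ℝ) else 0) * (if m = l then f m a b else 0) := by
    intro m
    rw [Finset.sum_eq_single a]
    · by_cases hmk : m ≤ k <;> simp [zetaN, blkDiagN, hmk]
    · intro c _ hca
      have : ¬ (a = c) := fun h => hca h.symm
      simp [zetaN, this]
    · simp
  simp_rw [hinner]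
  rw [Finset.sum_eq_single l]
  · by_cases hlk : l ≤ k <;> simp [hlk]
  · intro m _ hml; simp [hml]
  · simp

/-! ### entries of the closed-loop blocks -/

lemma AK_apply (P : Plant N) (K : KGains P) (L : LGains P)
    (k l : Fin (N+1)) (a b : Idx P.nd) :
    AK P K L (k, a) (l, b) =
      (if k.1 = l.1 then P.A a b + (L k * Cup P k) a b else 0) +
        ((if l.1 ≤ k.1 then (Bdown P l * K l) a b else 0) -
          (if h : l.1 + 1 < N + 1 then
              (if l.1 + 1 ≤ k.1 then (Bdown P ⟨l.1+1, h⟩ * K ⟨l.1+1, h⟩) a b else 0)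
            else 0)) := by
  unfold AK
  rw [zetaN_inv, Matrix.add_apply, Matrix.add_apply, mul_muN_apply]
  simp_rw [zetaN_mul_blkDiagN]
  have h1 : blkDiagN (fun _ => P.A) (k,a) (l,b) = if k.1 = l.1 then P.A a b else 0 := by
    simp [blkDiagN, Fin.ext_iff]
  have h2 : blkDiagN (fun i => L i * Cup P i) (k,a) (l,b)
      = if k.1 = l.1 then (L k * Cup P k) a b else 0 := by
    by_cases h : k = l
    · subst h; simp [blkDiagN]
    · rw [show blkDiagN (fun i => L i * Cup P i) (k,a) (l,b) = 0 by simp [blkDiagN, h]]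
      rw [if_neg (fun hc => h (Fin.ext hc))]
  rw [h1, h2]
  have h3 : (if l ≤ k then (Bdown P l * K l) a b else 0)
      = if l.1 ≤ k.1 then (Bdown P l * K l) a b else 0 := by simp only [Fin.le_def]
  have h4 : (if h : l.1 + 1 < N + 1 then
        (if (⟨l.1+1, h⟩ : Fin (N+1)) ≤ k then (Bdown P ⟨l.1+1,h⟩ * K ⟨l.1+1,h⟩) a b else 0)
      else 0)
      = (if h : l.1 + 1 < N + 1 then
        (if l.1 + 1 ≤ k.1 then (Bdown P ⟨l.1+1,h⟩ * K ⟨l.1+1,h⟩) a b else 0) else 0) := by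
    by_cases h : l.1 + 1 < N + 1
    · rw [dif_pos h, dif_pos h]; simp only [Fin.le_def]
    · rw [dif_neg h, dif_neg h]
  rw [h3, h4]
  split_ifs <;> ring

lemma B_E_eq (P : Plant N) (K : KGains P) :
    P.B * Matrix.of (fun rr (x : CtrIx P.nd) => (padGe P.md x.1 * K x.1) rr x.2)
      = Matrix.of (fun (a : Idx P.nd) (x : CtrIx P.nd) => (Bdown P x.1 * K x.1) a x.2) := by
  ext a x
  obtain ⟨m, c⟩ := x
  rw [Matrix.of_apply, Matrix.mul_apply]
  simp_rw [Matrix.of_apply, Matrix.mul_apply, Finset.mul_sum]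
  rw [Finset.sum_comm]
  refine Finset.sum_congr rfl fun s _ => ?_
  rw [Finset.sum_eq_single s.val]
  · simp [padGe, Bdown]
  · intro rr _ hrr; simp [padGe, hrr]
  · simp

lemma B_CK_apply (P : Plant N) (K : KGains P) (a : Idx P.nd) (l : Fin (N+1)) (b : Idx P.nd) :
    (P.B * CK P K) a (l, b) =
      (Bdown P l * K l) a b -
        (if h : l.1 + 1 < N + 1 then (Bdown P ⟨l.1+1,h⟩ * K ⟨l.1+1,h⟩) a b else 0) := by
  unfold CK
  rw [zetaN_inv, ← Matrix.mul_assoc, B_E_eq, mul_muN_apply]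
  simp

lemma padLeT_mul_C (P : Plant N) (k : Fin (N+1)) :
    (padLe P.pd k)ᵀ * P.C = Cup P k := by
  ext t b
  rw [Matrix.mul_apply]
  rw [Finset.sum_eq_single t.val]
  · simp [padLe, Cup]
  · intro i _ hi
    have : ¬ ((i : Idx P.pd) = t.val) := hi
    simp [padLe, this]
  · simp

lemma BK_C_apply (P : Plant N) (L : LGains P) (k : Fin (N+1)) (a b : Idx P.nd) :
    (BK P L * P.C) (k, a) b = -((L k * Cup P k) a b) := by
  rw [Matrix.mul_apply]
  have hterm : ∀ c, BK P L (k, a) c * P.C c b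
      = -((L k * (padLe P.pd k)ᵀ) a c * P.C c b) := by
    intro c; simp [BK, neg_mul]
  simp_rw [hterm]
  rw [Finset.sum_neg_distrib, ← Matrix.mul_apply, Matrix.mul_assoc, padLeT_mul_C]

/-! ### the collapse map and the reduced space -/

def rho (nd : Fin (N+1) → ℕ) (j : Fin (N+1)) : BigIx nd → BigIx nd :=
  Sum.elim (fun y => if y.1 < j then Sum.inl y else Sum.inr y.2) Sum.inr

lemma rho_idem (nd : Fin (N+1) → ℕ) (j : Fin (N+1)) (x : BigIx nd) :
    rho nd j (rho nd j x) = rho nd j x := by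
  cases x with
  | inl y => by_cases h : y.1 < j <;> simp [rho, h]
  | inr a => simp [rho]

abbrev RedIx (nd : Fin (N+1) → ℕ) (j : Fin (N+1)) : Type := {x : BigIx nd // rho nd j x = x}

def Smat (nd : Fin (N+1) → ℕ) (j : Fin (N+1)) : Matrix (BigIx nd) (RedIx nd j) ℝ :=
  Matrix.of fun x d => if rho nd j x = d.val then 1 else 0

def Pmat (nd : Fin (N+1) → ℕ) (j : Fin (N+1)) : Matrix (RedIx nd j) (BigIx nd) ℝ :=
  Matrix.of fun d x => if x = d.val then 1 else 0

lemma Pmat_mul {nd : Fin (N+1) → ℕ} {j : Fin (N+1)} {α : Type*}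
    (W : Matrix (BigIx nd) α ℝ) (d : RedIx nd j) (c : α) :
    (Pmat nd j * W) d c = W d.val c := by
  rw [Matrix.mul_apply, Finset.sum_eq_single d.val]
  · simp [Pmat]
  · intro x _ hx; simp [Pmat, hx]
  · simp

lemma Smat_mul {nd : Fin (N+1) → ℕ} {j : Fin (N+1)} {α : Type*}
    (W : Matrix (RedIx nd j) α ℝ) (x : BigIx nd) (c : α) :
    (Smat nd j * W) x c = W ⟨rho nd j x, rho_idem nd j x⟩ c := by
  rw [Matrix.mul_apply, Finset.sum_eq_single (⟨rho nd j x, rho_idem nd j x⟩ : RedIx nd j)]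
  · simp [Smat]
  · intro d _ hd
    have : ¬ (rho nd j x = d.val) := fun h => hd (Subtype.ext h.symm)
    simp [Smat, this]
  · simp

lemma Pmat_mul_Smat (nd : Fin (N+1) → ℕ) (j : Fin (N+1)) :
    Pmat nd j * Smat nd j = 1 := by
  ext d d'
  rw [Pmat_mul]
  by_cases h : d = d'
  · subst h; simp [Smat, d.prop, Matrix.one_apply]
  · have hval : ¬ (d.val = d'.val) := fun hc => h (Subtype.ext hc)
    rw [Matrix.one_apply_ne h]
    simp [Smat, d.prop, hval]

lemma Tmat_mul_Smat (nd : Fin (N+1) → ℕ) (j : Fin (N+1)) :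
    Tmat nd j * Smat nd j = 0 := by
  ext a d
  rw [Matrix.mul_apply, Fintype.sum_sum_type]
  have h2 : ∑ b : Idx nd, Tmat nd j a (Sum.inr b) * Smat nd j (Sum.inr b) d
      = Smat nd j (Sum.inr a) d := by
    rw [Finset.sum_eq_single a]
    · simp [Tmat]
    · intro b _ hb
      have : ¬ (a = b) := fun h => hb h.symm
      simp [Tmat, this]
    · simp
  have h1 : ∑ y : CtrIx nd, Tmat nd j a (Sum.inl y) * Smat nd j (Sum.inl y) d
      = -(Smat nd j (Sum.inl (j, a)) d) := by
    rw [Finset.sum_eq_single ((j, a) : CtrIx nd)]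
    · simp [Tmat]
    · intro y _ hy
      have : ¬ (y.1 = j ∧ a = y.2) := by
        rintro ⟨hh1, hh2⟩
        exact hy (by obtain ⟨y1, y2⟩ := y; simp at hh1 hh2; rw [hh1, hh2])
      simp [Tmat, this]
    · simp
  rw [h1, h2]
  have : Smat nd j (Sum.inl (j, a)) d = Smat nd j (Sum.inr a) d := by
    simp [Smat, rho]
    congr
  rw [this, Matrix.zero_apply]
  ring

lemma mul_Smat_inl {nd : Fin (N+1) → ℕ} {j : Fin (N+1)}
    (W : Matrix (BigIx nd) (BigIx nd) ℝ) (x : BigIx nd) (d : RedIx nd j)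
    (l : Fin (N+1)) (b : Idx nd) (hd : d.val = Sum.inl (l, b)) :
    (W * Smat nd j) x d = W x (Sum.inl (l, b)) := by
  have hlj : l < j := by
    by_contra h
    have hp := d.prop
    rw [hd] at hp
    simp [rho, h] at hp
  rw [Matrix.mul_apply, Finset.sum_eq_single (Sum.inl (l, b) : BigIx nd)]
  · simp [Smat, rho, hlj, hd]
  · intro y _ hy
    have hz : ¬ (rho nd j y = d.val) := by
      rw [hd]
      cases y with
      | inr c => simp [rho]
      | inl z =>
        by_cases hzj : z.1 < j
        · simp only [rho, Sum.elim_inl, if_pos hzj]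
          intro hc
          exact hy (by rw [Sum.inl.injEq] at hc; rw [hc])
        · simp [rho, hzj]
    simp [Smat, hz]
  · simp

lemma mul_Smat_inr {nd : Fin (N+1) → ℕ} {j : Fin (N+1)}
    (W : Matrix (BigIx nd) (BigIx nd) ℝ) (x : BigIx nd) (d : RedIx nd j)
    (b : Idx nd) (hd : d.val = Sum.inr b) :
    (W * Smat nd j) x d =
      (∑ m : Fin (N+1), if j ≤ m then W x (Sum.inl (m, b)) else 0) + W x (Sum.inr b) := by
  rw [Matrix.mul_apply, Fintype.sum_sum_type]
  congr 1
  · rw [Fintype.sum_prod_type]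
    refine Finset.sum_congr rfl fun m _ => ?_
    by_cases hm : m < j
    · rw [if_neg (not_le.2 hm), Finset.sum_eq_zero]
      intro c _
      have : ¬ (rho nd j (Sum.inl (m, c)) = d.val) := by
        rw [hd]; simp [rho, hm]
      simp [Smat, this]
    · rw [if_pos (le_of_not_gt hm), Finset.sum_eq_single b]
      · have : rho nd j (Sum.inl (m, b)) = d.val := by rw [hd]; simp [rho, hm]
        simp [Smat, this]
      · intro c _ hc
        have : ¬ (rho nd j (Sum.inl (m, c)) = d.val) := by
          rw [hd]; simp [rho, hm, hc]
        simp [Smat, this]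
      · simp
  · rw [Finset.sum_eq_single b]
    · have : rho nd j (Sum.inr b) = d.val := by rw [hd]; simp [rho]
      simp [Smat, this]
    · intro c _ hc
      have : ¬ (rho nd j (Sum.inr c) = d.val) := by rw [hd]; simp [rho, hc]
      simp [Smat, this]
    · simp

/-! ### the invariance identity -/

lemma AS_row (P : Plant N) (K : KGains P) (L : LGains P) (j : Fin (N+1))
    (x : BigIx P.nd) (d : RedIx P.nd j) :
    (Acal P K L * Smat P.nd j) x d
      = (Acal P K L * Smat P.nd j) (rho P.nd j x) d := by
  cases x with
  | inr a => simp [rho]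
  | inl y =>
    obtain ⟨k, a⟩ := y
    by_cases hk : k < j
    · simp [rho, hk]
    · have hjk : j ≤ k := le_of_not_gt hk
      have hjk' : j.1 ≤ k.1 := hjk
      have hrho : rho P.nd j (Sum.inl (k,a)) = Sum.inr a := by simp [rho, hk]
      rw [hrho]
      rcases hv : d.val with y' | b
      · obtain ⟨l, b⟩ := y'
        rw [mul_Smat_inl _ _ d l b hv, mul_Smat_inl _ _ d l b hv]
        have hlj : l < j := by
          by_contra h
          have hp := d.prop
          rw [hv] at hp
          simp [rho, h] at hp
        have hlk : l.1 < k.1 := lt_of_lt_of_le hlj hjk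
        have hl1 : l.1 + 1 < N + 1 := by have := k.isLt; omega
        show Acal P K L (Sum.inl (k,a)) (Sum.inl (l,b))
          = Acal P K L (Sum.inr a) (Sum.inl (l,b))
        unfold Acal
        rw [Matrix.fromBlocks_apply₁₁, Matrix.fromBlocks_apply₂₁]
        rw [AK_apply, B_CK_apply, dif_pos hl1, dif_pos hl1]
        rw [if_neg (by omega), if_pos (by omega), if_pos (by omega)]
        ring
      · rw [mul_Smat_inr _ _ d b hv, mul_Smat_inr _ _ d b hv]
        unfold Acal
        simp only [Matrix.fromBlocks_apply₁₁, Matrix.fromBlocks_apply₁₂,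
          Matrix.fromBlocks_apply₂₁, Matrix.fromBlocks_apply₂₂]
        set g : ℕ → ℝ := fun i =>
          if h : i < N + 1 then (Bdown P ⟨i,h⟩ * K ⟨i,h⟩) a b else 0 with hgdef
        have hgz : ∀ i, N + 1 ≤ i → g i = 0 := fun i hi => dif_neg (by omega)
        have hgm : ∀ m : Fin (N+1), g m.1 = (Bdown P m * K m) a b := by
          intro m; rw [hgdef]; simp only [dif_pos m.isLt, Fin.eta]
        have hAKm : ∀ m : Fin (N+1), AK P K L (k,a) (m,b) =
            (if k.1 = m.1 then P.A a b + (L k * Cup P k) a b else 0) +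
              ((if m.1 ≤ k.1 then g m.1 else 0) -
                (if m.1 + 1 ≤ k.1 then g (m.1+1) else 0)) := by
          intro m
          rw [AK_apply, hgm]
          congr 1
          congr 1
          by_cases h1 : m.1 + 1 < N + 1
          · rw [dif_pos h1]
            by_cases h2 : m.1 + 1 ≤ k.1
            · simp only [hgdef, dif_pos h1, if_pos h2]
            · rw [if_neg h2, if_neg h2]
          · rw [dif_neg h1, if_neg (by have := k.isLt; omega)]
        have hBCKm : ∀ m : Fin (N+1), (P.B * CK P K) a (m,b) = g m.1 - g (m.1+1) := by
          intro m
          rw [B_CK_apply, hgm]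
        simp_rw [hAKm, hBCKm, BK_C_apply]
        have hsplit : ∀ m : Fin (N+1),
            (if j ≤ m then (if k.1 = m.1 then P.A a b + (L k * Cup P k) a b else 0) +
              ((if m.1 ≤ k.1 then g m.1 else 0) - (if m.1 + 1 ≤ k.1 then g (m.1+1) else 0))
              else 0)
            = (if j ≤ m then (if k.1 = m.1 then P.A a b + (L k * Cup P k) a b else 0) else 0)
              + (if j ≤ m then
                  ((if m.1 ≤ k.1 then g m.1 else 0) - (if m.1 + 1 ≤ k.1 then g (m.1+1) else 0))
                else 0) := by
          intro m; split_ifs <;> simp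
        simp_rw [hsplit]
        rw [Finset.sum_add_distrib]
        have hS1 : ∑ m : Fin (N+1),
            (if j ≤ m then (if k.1 = m.1 then P.A a b + (L k * Cup P k) a b else 0) else 0)
            = P.A a b + (L k * Cup P k) a b := by
          rw [Finset.sum_eq_single k]
          · rw [if_pos hjk, if_pos rfl]
          · intro m _ hm
            have : ¬ (k.1 = m.1) := fun h => hm (Fin.ext h.symm)
            simp [this]
          · simp
        rw [hS1, fin_telescope g hgz j k hjk]
        ring
  
lemma AS_eq (P : Plant N) (K : KGains P) (L : LGains P) (j : Fin (N+1)) :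
    Acal P K L * Smat P.nd j
      = Smat P.nd j * (Pmat P.nd j * (Acal P K L * Smat P.nd j)) := by
  ext x d
  rw [Smat_mul, Pmat_mul]
  exact AS_row P K L j x d

lemma SPL_eq (P : Plant N) (L : LGains P) (j : Fin (N+1)) :
    Smat P.nd j * (Pmat P.nd j * Lcal P L j) = Lcal P L j := by
  ext x c
  rw [Smat_mul, Pmat_mul]
  cases x with
  | inr a => simp [rho]
  | inl y =>
    by_cases h : y.1 < j
    · simp [rho, h]
    · simp [rho, h, Lcal]

/-! ### complexification and the abstract transfer-function vanishing lemma -/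

lemma mc_mul {α β γ : Type*} [Fintype β] (X : Matrix α β ℝ) (Y : Matrix β γ ℝ) :
    mc (X * Y) = mc X * mc Y := by
  ext a c
  simp only [mc, Matrix.map_apply, Matrix.mul_apply]
  push_cast
  ring

lemma mc_zero {α β : Type*} : mc (0 : Matrix α β ℝ) = 0 := by
  ext a c; simp [mc]

lemma key_vanish {ι κ γ δ : Type*} [Fintype ι] [DecidableEq ι]
    [Fintype κ] [DecidableEq κ] [Fintype δ]
    (A : Matrix ι ι ℂ) (S : Matrix ι κ ℂ) (M : Matrix κ κ ℂ) (T : Matrix γ ι ℂ)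
    (Lc : Matrix ι δ ℂ) (R : Matrix κ δ ℂ) (s : ℂ)
    (hAS : A * S = S * M) (hTS : T * S = 0) (hSR : S * R = Lc)
    (hinj : ∀ v : κ → ℂ, S *ᵥ v = 0 → v = 0)
    (hA : IsUnit (s • (1 : Matrix ι ι ℂ) - A)) :
    T * (s • 1 - A)⁻¹ * Lc = 0 := by
  have hAdet : IsUnit (s • (1:Matrix ι ι ℂ) - A).det :=
    (Matrix.isUnit_iff_isUnit_det _).1 hA
  have hM : IsUnit (s • (1 : Matrix κ κ ℂ) - M) := by
    rw [Matrix.isUnit_iff_isUnit_det, isUnit_iff_ne_zero]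
    intro hdet
    obtain ⟨v, hv0, hv⟩ := Matrix.exists_mulVec_eq_zero_iff.2 hdet
    apply hv0
    apply hinj
    have hMv : M *ᵥ v = s • v := by
      rw [Matrix.sub_mulVec, sub_eq_zero] at hv
      rw [← hv, Matrix.smul_mulVec, Matrix.one_mulVec]
    have h1 : (s • (1:Matrix ι ι ℂ) - A) *ᵥ (S *ᵥ v) = 0 := by
      have t1 : (s • (1:Matrix ι ι ℂ)) *ᵥ (S *ᵥ v) = s • (S *ᵥ v) := by
        rw [Matrix.smul_mulVec, Matrix.one_mulVec]
      have t2 : A *ᵥ (S *ᵥ v) = s • (S *ᵥ v) := by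
        rw [Matrix.mulVec_mulVec, hAS, ← Matrix.mulVec_mulVec, hMv, Matrix.mulVec_smul]
      rw [Matrix.sub_mulVec, t1, t2, sub_self]
    have h2 := congrArg (fun w => (s • (1:Matrix ι ι ℂ) - A)⁻¹ *ᵥ w) h1
    simp only [Matrix.mulVec_mulVec, Matrix.mulVec_zero] at h2
    rwa [← Matrix.mul_assoc, Matrix.nonsing_inv_mul _ hAdet, Matrix.one_mul] at h2
  have hMdet : IsUnit (s • (1:Matrix κ κ ℂ) - M).det :=
    (Matrix.isUnit_iff_isUnit_det _).1 hM
  have h1 : (s • (1:Matrix ι ι ℂ) - A) * S = S * (s • (1:Matrix κ κ ℂ) - M) := by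
    rw [Matrix.sub_mul, Matrix.mul_sub, hAS, Matrix.smul_mul, Matrix.mul_smul,
      Matrix.one_mul, Matrix.mul_one]
  have hswap : (s • (1:Matrix ι ι ℂ) - A)⁻¹ * S = S * (s • (1:Matrix κ κ ℂ) - M)⁻¹ := by
    calc (s • (1:Matrix ι ι ℂ) - A)⁻¹ * S
        = (s • (1:Matrix ι ι ℂ) - A)⁻¹ *
            (S * (s • (1:Matrix κ κ ℂ) - M) * (s • (1:Matrix κ κ ℂ) - M)⁻¹) := by
          rw [Matrix.mul_assoc, Matrix.mul_nonsing_inv _ hMdet, Matrix.mul_one]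
      _ = (s • (1:Matrix ι ι ℂ) - A)⁻¹ *
            ((s • (1:Matrix ι ι ℂ) - A) * S * (s • (1:Matrix κ κ ℂ) - M)⁻¹) := by rw [h1]
      _ = S * (s • (1:Matrix κ κ ℂ) - M)⁻¹ := by
          rw [Matrix.mul_assoc ((s • (1:Matrix ι ι ℂ) - A)) S, ← Matrix.mul_assoc,
            Matrix.nonsing_inv_mul _ hAdet, Matrix.one_mul]
  calc T * (s • (1:Matrix ι ι ℂ) - A)⁻¹ * Lc
      = T * (s • (1:Matrix ι ι ℂ) - A)⁻¹ * (S * R) := by rw [hSR]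
    _ = T * ((s • (1:Matrix ι ι ℂ) - A)⁻¹ * S) * R := by
        rw [Matrix.mul_assoc, Matrix.mul_assoc, Matrix.mul_assoc]
    _ = T * S * ((s • (1:Matrix κ κ ℂ) - M)⁻¹ * R) := by
        rw [hswap, ← Matrix.mul_assoc T S, Matrix.mul_assoc (T * S)]
    _ = 0 := by rw [hTS, Matrix.zero_mul]

end Stmt11Aux

/-- for arbitrary gains, `T_j (sI − 𝒜)⁻¹ ℒ_j = 0`: the transfer function
from the innovation channel `ℒ_j` to `x − x^{K_j}` vanishes identically (certainty
equivalence). -/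
theorem stmt11 {N : ℕ} (P : Plant N)
    (hdim : ∀ k : Fin (N+1), 0 < P.nd k ∧ 0 < P.md k ∧ 0 < P.pd k)
    (K : KGains P) (L : LGains P) (j : Fin (N+1))
    (s : ℂ) (hs : s ∉ spectrum ℂ (mc (Acal P K L))) :
    mc (Tmat P.nd j) * (s • 1 - mc (Acal P K L))⁻¹ * mc (Lcal P L j) = 0 := by
  classical
  have hA : IsUnit (s • (1 : Matrix (BigIx P.nd) (BigIx P.nd) ℂ) - mc (Acal P K L)) := by
    have h := spectrum.notMem_iff.mp hs
    rwa [Algebra.algebraMap_eq_smul_one] at h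
  have hAS : mc (Acal P K L) * mc (Smat P.nd j)
      = mc (Smat P.nd j) * mc (Pmat P.nd j * (Acal P K L * Smat P.nd j)) := by
    rw [← mc_mul, ← mc_mul]
    exact congrArg mc (AS_eq P K L j)
  have hTS : mc (Tmat P.nd j) * mc (Smat P.nd j) = 0 := by
    rw [← mc_mul, Tmat_mul_Smat, mc_zero]
  have hSR : mc (Smat P.nd j) * mc (Pmat P.nd j * Lcal P L j) = mc (Lcal P L j) := by
    rw [← mc_mul, SPL_eq]
  have hinj : ∀ v : RedIx P.nd j → ℂ, mc (Smat P.nd j) *ᵥ v = 0 → v = 0 := by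
    intro v hv
    funext d
    have h1 : (mc (Smat P.nd j) *ᵥ v) d.val = v d := by
      simp only [Matrix.mulVec, dotProduct]
      rw [Finset.sum_eq_single d]
      · simp [mc, Smat, d.prop]
      · intro d' _ hd'
        have : ¬ (rho P.nd j d.val = d'.val) := by
          rw [d.prop]; exact fun h => hd' (Subtype.ext h).symm
        simp [mc, Smat, this]
      · simp
    rw [hv] at h1
    simpa using h1.symm
  exact key_vanish (mc (Acal P K L)) (mc (Smat P.nd j))
    (mc (Pmat P.nd j * (Acal P K L * Smat P.nd j))) (mc (Tmat P.nd j))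
    (mc (Lcal P L j)) (mc (Pmat P.nd j * Lcal P L j)) s hAS hTS hSR hinj hA

end TriLQG
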